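/- Let X be a zero-mean Gaussian process on [0,T] with covariance measure μ. For f ∈ L_μ, E(∫₀ᵀ f dX)² = ∫₀ᵀ f²(s) dμ_D(s) + 2∫_{[0,T]²} 1_{(s₁>s₂)} f(s₁)f(s₂) dμ(s₁,s₂), where μ_D is the measure on [0,T] defined by μ_D([0,t]) = μ(D_t) with D_t = {(s,s): s ≤ t}, and the first term equals ∫₀ᵗ f²(s) d[X]_s since [X]_t = μ(D_t). -/

import Mathlib

open Set MeasureTheory

noncomputable section

/-- Integral of `f` with respect to a finite signed measure, via the Jordan decomposition. -/
def sintegral {α : Type*} [MeasurableSpace α] (μ : SignedMeasure α) (f : α → ℝ) : ℝ :=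
  (∫ x, f x ∂μ.toJordanDecomposition.posPart) - ∫ x, f x ∂μ.toJordanDecomposition.negPart

lemma sm_apply {α : Type*} [MeasurableSpace α] (s : SignedMeasure α) {A : Set α}
    (hA : MeasurableSet A) :
    s A = (s.toJordanDecomposition.posPart A).toReal -
      (s.toJordanDecomposition.negPart A).toReal := by
  conv_lhs => rw [← s.toSignedMeasure_toJordanDecomposition]
  rw [JordanDecomposition.toSignedMeasure, VectorMeasure.sub_apply,
    Measure.toSignedMeasure_apply_measurable hA, Measure.toSignedMeasure_apply_measurable hA]
  rfl

lemma tv_parts {α : Type*} [MeasurableSpace α] (s : SignedMeasure α) {A : Set α}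
    (h : s.totalVariation A = 0) :
    s.toJordanDecomposition.posPart A = 0 ∧ s.toJordanDecomposition.negPart A = 0 := by
  rw [SignedMeasure.totalVariation, Measure.add_apply, add_eq_zero] at h
  exact h

lemma meas_Iic_eq {m : Measure ℝ} {T : ℝ} (hm : m ((Icc 0 T)ᶜ) = 0) (a : ℝ) :
    m (Iic a) = m (Icc 0 T ∩ Iic a) := by
  refine le_antisymm ?_ (measure_mono inter_subset_right)
  calc m (Iic a) ≤ m ((Icc 0 T ∩ Iic a) ∪ (Icc 0 T)ᶜ) := by
        refine measure_mono fun x hx => ?_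
        by_cases h : x ∈ Icc 0 T
        · exact Or.inl ⟨h, hx⟩
        · exact Or.inr h
    _ ≤ m (Icc 0 T ∩ Iic a) + m ((Icc 0 T)ᶜ) := measure_union_le _ _
    _ = m (Icc 0 T ∩ Iic a) := by rw [hm, add_zero]

lemma ext_T {T : ℝ} (hT : 0 < T) (σ τ : SignedMeasure ℝ)
    (hσ : σ.totalVariation ((Icc 0 T)ᶜ) = 0) (hτ : τ.totalVariation ((Icc 0 T)ᶜ) = 0)
    (h : ∀ t ∈ Icc (0:ℝ) T, σ (Icc 0 t) = τ (Icc 0 t)) : σ = τ := by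
  set pσ := σ.toJordanDecomposition.posPart with hpσ
  set nσ := σ.toJordanDecomposition.negPart with hnσ
  set pτ := τ.toJordanDecomposition.posPart with hpτ
  set nτ := τ.toJordanDecomposition.negPart with hnτ
  obtain ⟨hσ1, hσ2⟩ := tv_parts σ hσ
  obtain ⟨hτ1, hτ2⟩ := tv_parts τ hτ
  have key : pσ + nτ = pτ + nσ := by
    refine Measure.ext_of_Iic _ _ fun a => ?_
    have e1 : (pσ + nτ) (Iic a) = pσ (Icc 0 T ∩ Iic a) + nτ (Icc 0 T ∩ Iic a) := by
      rw [Measure.add_apply, meas_Iic_eq hσ1, meas_Iic_eq hτ2]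
    have e2 : (pτ + nσ) (Iic a) = pτ (Icc 0 T ∩ Iic a) + nσ (Icc 0 T ∩ Iic a) := by
      rw [Measure.add_apply, meas_Iic_eq hτ1, meas_Iic_eq hσ2]
    rw [e1, e2]
    by_cases ha : 0 ≤ a
    · have hset : Icc 0 T ∩ Iic a = Icc 0 (min T a) := by
        ext x; simp only [mem_inter_iff, mem_Icc, mem_Iic, le_min_iff]; tauto
      have hmem : min T a ∈ Icc (0:ℝ) T := ⟨le_min hT.le ha, min_le_left _ _⟩
      have := h _ hmem
      rw [sm_apply σ measurableSet_Icc, sm_apply τ measurableSet_Icc] at this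
      rw [hset]
      have h1 : pσ (Icc 0 (min T a)) ≠ ⊤ := measure_ne_top _ _
      have h2 : nσ (Icc 0 (min T a)) ≠ ⊤ := measure_ne_top _ _
      have h3 : pτ (Icc 0 (min T a)) ≠ ⊤ := measure_ne_top _ _
      have h4 : nτ (Icc 0 (min T a)) ≠ ⊤ := measure_ne_top _ _
      rw [← ENNReal.toReal_eq_toReal_iff' (by finiteness) (by finiteness),
        ENNReal.toReal_add h1 h4, ENNReal.toReal_add h3 h2]
      linarith
    · have hset : Icc 0 T ∩ Iic a = ∅ := by
        ext x; simp only [mem_inter_iff, mem_Icc, mem_Iic, mem_empty_iff_false, iff_false]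
        rintro ⟨⟨h0, _⟩, hxa⟩; exact ha (h0.trans hxa)
      rw [hset]; simp
  refine VectorMeasure.ext fun A hA => ?_
  have hkey : pσ A + nτ A = pτ A + nσ A := by
    have := congrFun (congrArg (fun m : Measure ℝ => (m : Set ℝ → _)) key) A
    simpa [Measure.add_apply] using this
  rw [sm_apply σ hA, sm_apply τ hA]
  have h1 : pσ A ≠ ⊤ := measure_ne_top _ _
  have h2 : nσ A ≠ ⊤ := measure_ne_top _ _
  have h3 : pτ A ≠ ⊤ := measure_ne_top _ _
  have h4 : nτ A ≠ ⊤ := measure_ne_top _ _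
  have : (pσ A).toReal + (nτ A).toReal = (pτ A).toReal + (nσ A).toReal := by
    rw [← ENNReal.toReal_add h1 h4, ← ENNReal.toReal_add h3 h2, hkey]
  linarith

theorem stmt_14 {Ω : Type*} [MeasureSpace Ω] [IsProbabilityMeasure (volume : Measure Ω)]
    (T : ℝ) (hT : 0 < T) (μ : SignedMeasure (ℝ × ℝ))
    (hsymm : ∀ A : Set (ℝ × ℝ), MeasurableSet A → μ A = μ (Prod.swap ⁻¹' A))
    (hsupp : μ.totalVariation ((Icc 0 T ×ˢ Icc 0 T)ᶜ) = 0)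
    (μD : SignedMeasure ℝ)
    (hμD : ∀ t ∈ Icc (0:ℝ) T, μD (Icc 0 t) = μ {p : ℝ × ℝ | p.1 = p.2 ∧ p.1 ∈ Icc 0 t})
    (hμDsupp : μD.totalVariation ((Icc (0:ℝ) T)ᶜ) = 0)
    (W : (ℝ → ℝ) → Ω → ℝ)
    (f : ℝ → ℝ) (hf : Measurable f)
    (hfμ : Integrable (fun p : ℝ × ℝ => |f p.1| * |f p.2|) μ.totalVariation)
    (hiso : ∫ ω, (W f ω) ^ 2 = sintegral μ (fun p => f p.1 * f p.2)) :
    ∫ ω, (W f ω) ^ 2 =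
      sintegral μD (fun s => (f s) ^ 2) +
        2 * sintegral μ (fun p => if p.2 < p.1 then f p.1 * f p.2 else 0) := by
  classical
  rw [hiso]
  -- notation
  set P := μ.toJordanDecomposition.posPart with hP
  set N := μ.toJordanDecomposition.negPart with hN
  have hswap : Measurable (Prod.swap : ℝ × ℝ → ℝ × ℝ) := measurable_swap
  -- the three pieces
  set gd : ℝ × ℝ → ℝ := fun x => if x.1 = x.2 then f x.1 * f x.2 else 0 with hgd
  set gu : ℝ × ℝ → ℝ := fun x => if x.2 < x.1 then f x.1 * f x.2 else 0 with hgu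
  set gl : ℝ × ℝ → ℝ := fun x => if x.1 < x.2 then f x.1 * f x.2 else 0 with hgl
  have hff_meas : Measurable (fun x : ℝ × ℝ => f x.1 * f x.2) :=
    (hf.comp measurable_fst).mul (hf.comp measurable_snd)
  have hdiag : MeasurableSet {x : ℝ × ℝ | x.1 = x.2} :=
    measurableSet_eq_fun measurable_fst measurable_snd
  have hup : MeasurableSet {x : ℝ × ℝ | x.2 < x.1} :=
    measurableSet_lt measurable_snd measurable_fst
  have hlo : MeasurableSet {x : ℝ × ℝ | x.1 < x.2} :=
    measurableSet_lt measurable_fst measurable_snd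
  have hgd_meas : Measurable gd := Measurable.ite hdiag hff_meas measurable_const
  have hgu_meas : Measurable gu := Measurable.ite hup hff_meas measurable_const
  have hgl_meas : Measurable gl := Measurable.ite hlo hff_meas measurable_const
  -- integrability
  have hPN : Integrable (fun x : ℝ × ℝ => |f x.1| * |f x.2|) P ∧
      Integrable (fun x : ℝ × ℝ => |f x.1| * |f x.2|) N := by
    rw [← integrable_add_measure]; exact hfμ
  have hbound : ∀ (g : ℝ × ℝ → ℝ), (∀ x, ‖g x‖ ≤ |f x.1| * |f x.2|) → Measurable g →
      Integrable g P ∧ Integrable g N := by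
    intro g hg hgm
    exact ⟨hPN.1.mono' hgm.aestronglyMeasurable (Filter.Eventually.of_forall hg),
      hPN.2.mono' hgm.aestronglyMeasurable (Filter.Eventually.of_forall hg)⟩
  have hble : ∀ (c : Prop) [Decidable c] (x : ℝ × ℝ),
      ‖if c then f x.1 * f x.2 else 0‖ ≤ |f x.1| * |f x.2| := by
    intro c _ x
    by_cases h : c
    · simp [h, Real.norm_eq_abs, abs_mul, le_refl]
    · simp only [h, if_false, norm_zero]
      positivity
  obtain ⟨hgdP, hgdN⟩ := hbound gd (fun x => hble _ x) hgd_meas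
  obtain ⟨hguP, hguN⟩ := hbound gu (fun x => hble _ x) hgu_meas
  obtain ⟨hglP, hglN⟩ := hbound gl (fun x => hble _ x) hgl_meas
  -- decomposition of the integrand
  have hsplit : (fun x : ℝ × ℝ => f x.1 * f x.2) = fun x => gd x + (gu x + gl x) := by
    funext x
    rcases lt_trichotomy x.1 x.2 with h | h | h
    · simp [hgd, hgu, hgl, h, h.ne, not_lt.2 h.le]
    · simp [hgd, hgu, hgl, h, lt_irrefl]
    · simp [hgd, hgu, hgl, h, h.ne', not_lt.2 h.le]
  -- swap invariance of P and N
  have hPmap : P.map Prod.swap = P ∧ N.map Prod.swap = N := by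
    haveI : IsFiniteMeasure (P.map Prod.swap) := P.isFiniteMeasure_map _
    haveI : IsFiniteMeasure (N.map Prod.swap) := N.isFiniteMeasure_map _
    have hsing : (P.map Prod.swap) ⟂ₘ (N.map Prod.swap) := by
      obtain ⟨S, hS, h1, h2⟩ := μ.toJordanDecomposition.mutuallySingular
      refine ⟨Prod.swap ⁻¹' S, hS.preimage hswap, ?_, ?_⟩
      · rw [Measure.map_apply hswap (hS.preimage hswap)]
        have : Prod.swap ⁻¹' (Prod.swap ⁻¹' S) = S := by ext x; simp
        rw [this]; exact h1
      · rw [← preimage_compl, Measure.map_apply hswap (hS.compl.preimage hswap)]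
        have : Prod.swap ⁻¹' (Prod.swap ⁻¹' Sᶜ) = Sᶜ := by ext x; simp
        rw [this]; exact h2
    set J' : JordanDecomposition (ℝ × ℝ) := ⟨P.map Prod.swap, N.map Prod.swap, hsing⟩ with hJ'
    have hJ'eq : μ = J'.toSignedMeasure := by
      refine VectorMeasure.ext fun A hA => ?_
      rw [JordanDecomposition.toSignedMeasure, VectorMeasure.sub_apply,
        Measure.toSignedMeasure_apply_measurable hA, Measure.toSignedMeasure_apply_measurable hA]
      show μ A = ((P.map Prod.swap) A).toReal - ((N.map Prod.swap) A).toReal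
      rw [Measure.map_apply hswap hA, Measure.map_apply hswap hA,
        ← sm_apply μ (hA.preimage hswap)]
      exact hsymm A hA
    have := SignedMeasure.toJordanDecomposition_eq hJ'eq
    constructor
    · exact (congrArg JordanDecomposition.posPart this).symm
    · exact (congrArg JordanDecomposition.negPart this).symm
  -- lower = upper
  have hswap_int : ∀ (m : Measure (ℝ × ℝ)), m.map Prod.swap = m → ∫ x, gl x ∂m = ∫ x, gu x ∂m := by
    intro m hm
    have h1 : ∫ x, gl x ∂(m.map Prod.swap) = ∫ x, gl (Prod.swap x) ∂m :=
      integral_map hswap.aemeasurable hgl_meas.aestronglyMeasurable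
    rw [hm] at h1
    rw [h1]
    congr 1
    funext x
    simp only [hgl, hgu, Prod.fst_swap, Prod.snd_swap]
    split_ifs with h
    · exact mul_comm _ _
    · rfl
  -- diagonal measure
  set e : ℝ → ℝ × ℝ := fun s => (s, s) with he
  have he_meas : Measurable e := measurable_id.prodMk measurable_id
  set D : Set (ℝ × ℝ) := {x : ℝ × ℝ | x.1 = x.2} with hD
  set PD : Measure ℝ := (P.restrict D).map Prod.fst with hPD
  set ND : Measure ℝ := (N.restrict D).map Prod.fst with hND
  haveI : IsFiniteMeasure PD := (P.restrict D).isFiniteMeasure_map _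
  haveI : IsFiniteMeasure ND := (N.restrict D).isFiniteMeasure_map _
  have hPD_apply : ∀ {B : Set ℝ}, MeasurableSet B → PD B = P (Prod.fst ⁻¹' B ∩ D) := by
    intro B hB
    rw [hPD, Measure.map_apply measurable_fst hB,
      Measure.restrict_apply (hB.preimage measurable_fst)]
  have hND_apply : ∀ {B : Set ℝ}, MeasurableSet B → ND B = N (Prod.fst ⁻¹' B ∩ D) := by
    intro B hB
    rw [hND, Measure.map_apply measurable_fst hB,
      Measure.restrict_apply (hB.preimage measurable_fst)]
  have hsingD : PD ⟂ₘ ND := by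
    obtain ⟨S, hS, h1, h2⟩ := μ.toJordanDecomposition.mutuallySingular
    refine ⟨e ⁻¹' S, hS.preimage he_meas, ?_, ?_⟩
    · rw [hPD_apply (hS.preimage he_meas)]
      refine le_antisymm (le_trans (measure_mono ?_) h1.le) (zero_le)
      rintro ⟨a, b⟩ ⟨hx1, hx2⟩
      have hab : a = b := hx2
      subst hab
      exact hx1
    · rw [← preimage_compl, hND_apply (hS.compl.preimage he_meas)]
      refine le_antisymm (le_trans (measure_mono ?_) h2.le) (zero_le)
      rintro ⟨a, b⟩ ⟨hx1, hx2⟩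
      have hab : a = b := hx2
      subst hab
      exact hx1
  set JD : JordanDecomposition ℝ := ⟨PD, ND, hsingD⟩ with hJD
  set νD : SignedMeasure ℝ := JD.toSignedMeasure with hνD
  have hJDeq : νD.toJordanDecomposition = JD := JD.toJordanDecomposition_toSignedMeasure
  -- μ's parts vanish off the square
  obtain ⟨hPsupp, hNsupp⟩ := tv_parts μ hsupp
  have hsub : Prod.fst ⁻¹' ((Icc (0:ℝ) T)ᶜ) ∩ D ⊆ (Icc 0 T ×ˢ Icc 0 T)ᶜ :=
    fun x hx hmem => hx.1 hmem.1
  have hνDsupp : νD.totalVariation ((Icc (0:ℝ) T)ᶜ) = 0 := by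
    rw [SignedMeasure.totalVariation, hJDeq]
    show (PD + ND) ((Icc (0:ℝ) T)ᶜ) = 0
    rw [Measure.add_apply, hPD_apply measurableSet_Icc.compl, hND_apply measurableSet_Icc.compl]
    have h1 : P (Prod.fst ⁻¹' ((Icc (0:ℝ) T)ᶜ) ∩ D) = 0 :=
      le_antisymm (le_trans (measure_mono hsub) hPsupp.le) (zero_le)
    have h2 : N (Prod.fst ⁻¹' ((Icc (0:ℝ) T)ᶜ) ∩ D) = 0 :=
      le_antisymm (le_trans (measure_mono hsub) hNsupp.le) (zero_le)
    rw [h1, h2, add_zero]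
  -- μD = νD
  have hμD_eq : μD = νD := by
    refine ext_T hT μD νD hμDsupp hνDsupp fun t ht => ?_
    have hsetD : Prod.fst ⁻¹' (Icc 0 t) ∩ D = {p : ℝ × ℝ | p.1 = p.2 ∧ p.1 ∈ Icc 0 t} := by
      ext x
      simp only [mem_inter_iff, mem_preimage, hD, mem_setOf_eq]
      tauto
    rw [hμD t ht, sm_apply νD measurableSet_Icc, hJDeq]
    show _ = (PD (Icc 0 t)).toReal - (ND (Icc 0 t)).toReal
    rw [hPD_apply measurableSet_Icc, hND_apply measurableSet_Icc, hsetD,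
      ← sm_apply μ (by rw [← hsetD]; exact (measurableSet_Icc.preimage measurable_fst).inter hdiag)]
  -- compute sintegral μD f²
  have hfsq_meas : Measurable fun s : ℝ => f s ^ 2 := hf.pow_const 2
  have hdiag_int : ∀ (m : Measure (ℝ × ℝ)) (mD : Measure ℝ), mD = (m.restrict D).map Prod.fst →
      ∫ s, f s ^ 2 ∂mD = ∫ x, gd x ∂m := by
    intro m mD hmD
    rw [hmD, integral_map measurable_fst.aemeasurable hfsq_meas.aestronglyMeasurable,
      ← integral_indicator hdiag]
    congr 1
    funext x
    by_cases h : x.1 = x.2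
    · have hxD : x ∈ D := h
      rw [indicator_of_mem hxD]
      show f x.1 ^ 2 = gd x
      rw [hgd]
      simp only [h, if_true]
      rw [← h, sq]
    · have hxD : x ∉ D := h
      rw [indicator_of_notMem hxD]
      show (0 : ℝ) = gd x
      rw [hgd]
      simp [h]
  have hJD2 : μD.toJordanDecomposition = JD := by rw [hμD_eq]; exact hJDeq
  have hsintD : sintegral μD (fun s => (f s) ^ 2) = ∫ x, gd x ∂P - ∫ x, gd x ∂N := by
    show (∫ s, f s ^ 2 ∂μD.toJordanDecomposition.posPart) -
        (∫ s, f s ^ 2 ∂μD.toJordanDecomposition.negPart) = _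
    rw [hJD2]
    show (∫ s, f s ^ 2 ∂PD) - (∫ s, f s ^ 2 ∂ND) = _
    rw [hdiag_int P PD hPD, hdiag_int N ND hND]
  -- final computation
  have hsumP : Integrable (fun x : ℝ × ℝ => gu x + gl x) P := hguP.add hglP
  have hsumN : Integrable (fun x : ℝ × ℝ => gu x + gl x) N := hguN.add hglN
  have hintP : ∫ x, f x.1 * f x.2 ∂P = ∫ x, gd x ∂P + (∫ x, gu x ∂P + ∫ x, gl x ∂P) := by
    rw [hsplit, integral_add hgdP hsumP, integral_add hguP hglP]
  have hintN : ∫ x, f x.1 * f x.2 ∂N = ∫ x, gd x ∂N + (∫ x, gu x ∂N + ∫ x, gl x ∂N) := by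
    rw [hsplit, integral_add hgdN hsumN, integral_add hguN hglN]
  have hlP : ∫ x, gl x ∂P = ∫ x, gu x ∂P := hswap_int P hPmap.1
  have hlN : ∫ x, gl x ∂N = ∫ x, gu x ∂N := hswap_int N hPmap.2
  have hA : sintegral μ (fun p : ℝ × ℝ => f p.1 * f p.2) =
      (∫ x, gd x ∂P + (∫ x, gu x ∂P + ∫ x, gl x ∂P)) -
        (∫ x, gd x ∂N + (∫ x, gu x ∂N + ∫ x, gl x ∂N)) := by
    show (∫ x, f x.1 * f x.2 ∂P) - (∫ x, f x.1 * f x.2 ∂N) = _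
    rw [hintP, hintN]
  have hB : sintegral μ gu = (∫ x, gu x ∂P) - ∫ x, gu x ∂N := rfl
  rw [hA, hB, hsintD, hlP, hlN]
  ring
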